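/- Let N ≥ 1, let F : ℤ^N → ℤ^N be a polynomial endomorphism over ℤ given by coordinate polynomials f₁, …, f_N ∈ ℤ[x₁,…,x_N], let p be a prime, and suppose every coordinate of F(0) is divisible by p^r for an integer r ≥ 1. Let D ∈ Mat_N(ℤ) be the Jacobian matrix D = (∂f_i/∂x_j (0))_{1≤i,j≤N}. Then for every k ≥ 1, F^(k+1)(0) ≡ (I + D + D² + ⋯ + D^k) · F(0) (mod p^(2r)), where points of ℤ^N are regarded as column vectors and the congruence holds coordinatewise. -/

import Mathlib

open MvPolynomial Finset

private lemma stmt9_aux1 {N : ℕ} (a : ℤ) (x : Fin N → ℤ) (hx : ∀ j, a ∣ x j)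
    (g : MvPolynomial (Fin N) ℤ) : a ∣ eval x g - eval 0 g := by
  induction g using MvPolynomial.induction_on with
  | C c => simp
  | add g1 g2 h1 h2 =>
      simpa [eval_add, add_sub_add_comm] using dvd_add h1 h2
  | mul_X g j h =>
      simp only [eval_mul, eval_X, Pi.zero_apply, mul_zero, sub_zero]
      exact Dvd.dvd.mul_left (hx j) _

private lemma stmt9_aux2 {N : ℕ} (a : ℤ) (x : Fin N → ℤ) (hx : ∀ j, a ∣ x j)
    (g : MvPolynomial (Fin N) ℤ) :
    a ^ 2 ∣ eval x g - eval 0 g - ∑ j, x j * eval 0 (pderiv j g) := by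
  induction g using MvPolynomial.induction_on with
  | C c => simp
  | add g1 g2 h1 h2 =>
      have h := dvd_add h1 h2
      simp only [eval_add, map_add, mul_add, Finset.sum_add_distrib] at *
      convert h using 1
      · rfl
      ring
  | mul_X g j h =>
      have key : ∑ i, x i * eval 0 (pderiv i (g * X j)) = x j * eval 0 g := by
        have : ∀ i : Fin N, x i * eval 0 (pderiv i (g * X j))
            = if i = j then x j * eval 0 g else 0 := by
          intro i
          rw [pderiv_mul, pderiv_X]
          by_cases hij : i = j <;> simp [hij, Pi.single_apply]
        rw [Finset.sum_congr rfl fun i _ => this i]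
        simp
      rw [eval_mul, eval_X, eval_mul, eval_X, Pi.zero_apply, mul_zero, sub_zero, key]
      have heq : eval x g * x j - x j * eval 0 g = x j * (eval x g - eval 0 g) := by ring
      rw [heq, sq]
      exact mul_dvd_mul (hx j) (stmt9_aux1 a x hx g)

/-- Suppose every coordinate of `F(0)` is divisible by `p^r` (`r ≥ 1`),
and let `D = (∂f_i/∂x_j (0))` be the Jacobian of `F` at the origin. Then for every `k ≥ 1`,
`F^(k+1)(0) ≡ (I + D + D² + ⋯ + D^k) · F(0) (mod p^(2r))` coordinatewise. -/
theorem stmt9 (N : ℕ) (hN : 1 ≤ N) (p : ℕ) (hp : p.Prime) (r : ℕ) (hr : 1 ≤ r)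
    (f : Fin N → MvPolynomial (Fin N) ℤ)
    (F : (Fin N → ℤ) → (Fin N → ℤ))
    (hF : ∀ x, F x = fun i => MvPolynomial.eval x (f i))
    (hdiv : ∀ i, (p : ℤ) ^ r ∣ F 0 i)
    (D : Matrix (Fin N) (Fin N) ℤ)
    (hD : ∀ i j, D i j = MvPolynomial.eval 0 (MvPolynomial.pderiv j (f i))) :
    ∀ k, 1 ≤ k → ∀ i,
      (p : ℤ) ^ (2 * r) ∣
        F^[k + 1] 0 i - (∑ l ∈ Finset.range (k + 1), D ^ l).mulVec (F 0) i := by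
  have hF0 : ∀ i, F 0 i = eval (0 : Fin N → ℤ) (f i) := by
    intro i; rw [hF]
  -- all iterates have coordinates divisible by p^r
  have hiter : ∀ m, ∀ j, (p : ℤ) ^ r ∣ F^[m] 0 j := by
    intro m
    induction m with
    | zero => intro j; simp
    | succ m ih =>
        intro j
        rw [Function.iterate_succ_apply']
        have h1 : (p : ℤ) ^ r ∣ eval (F^[m] 0) (f j) - eval 0 (f j) :=
          stmt9_aux1 _ _ ih (f j)
        have h2 : F (F^[m] 0) j = eval (F^[m] 0) (f j) := by rw [hF]
        rw [h2]
        have := dvd_add h1 ((hF0 j) ▸ hdiv j)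
        simpa using this
  have hpow : ((p : ℤ) ^ r) ^ 2 = (p : ℤ) ^ (2 * r) := by
    rw [← pow_mul, mul_comm]
  -- main induction
  have main : ∀ k, ∀ i,
      (p : ℤ) ^ (2 * r) ∣
        F^[k + 1] 0 i - (∑ l ∈ Finset.range (k + 1), D ^ l).mulVec (F 0) i := by
    intro k
    induction k with
    | zero =>
        intro i
        simp [Matrix.one_mulVec]
    | succ k ih =>
        intro i
        set y : Fin N → ℤ := F^[k + 1] 0 with hy
        set z : Fin N → ℤ := (∑ l ∈ Finset.range (k + 1), D ^ l).mulVec (F 0) with hz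
        have hFy : F^[k + 1 + 1] 0 i = eval y (f i) := by
          rw [Function.iterate_succ_apply', hF]
        have hTaylor : (p : ℤ) ^ (2 * r) ∣
            eval y (f i) - eval 0 (f i) - ∑ j, y j * eval 0 (pderiv j (f i)) := by
          rw [← hpow]
          exact stmt9_aux2 _ _ (hiter (k + 1)) (f i)
        have hsum : ∑ j, y j * eval 0 (pderiv j (f i)) = D.mulVec y i := by
          simp only [Matrix.mulVec, dotProduct]
          exact Finset.sum_congr rfl fun j _ => by rw [hD i j, mul_comm]
        have hclose : (p : ℤ) ^ (2 * r) ∣ D.mulVec y i - D.mulVec z i := by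
          have : D.mulVec y i - D.mulVec z i = ∑ j, D i j * (y j - z j) := by
            simp only [Matrix.mulVec, dotProduct, ← Finset.sum_sub_distrib]
            exact Finset.sum_congr rfl fun j _ => by ring
          rw [this]
          exact Finset.dvd_sum fun j _ => Dvd.dvd.mul_left (ih j) _
        have hS : (∑ l ∈ Finset.range (k + 1 + 1), D ^ l).mulVec (F 0) i
            = D.mulVec z i + F 0 i := by
          rw [geom_sum_succ, Matrix.add_mulVec, Matrix.mulVec_mulVec, Matrix.one_mulVec]
          rfl
        rw [hFy, hS]
        have hgoal : eval y (f i) - (D.mulVec z i + F 0 i)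
            = (eval y (f i) - eval 0 (f i) - ∑ j, y j * eval 0 (pderiv j (f i)))
              + (D.mulVec y i - D.mulVec z i) := by
          rw [hsum, hF0 i]; ring
        rw [hgoal]
        exact dvd_add hTaylor hclose
  intro k _ i
  exact main k i
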